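/- Every vector space of countable infinite dimension over the two-element field 𝔽_2 is indivisible with respect to nontrivial vectors: for every partition of the nonzero vectors of the space into finitely many pieces, one piece contains all nonzero vectors of an infinite-dimensional subspace. This follows from Hindman's theorem on finite sums. -/

import Mathlib

open Hindman

/-- Any sum of stream entries over a nonempty finset of indices is a finite sum. -/
lemma sum_mem_FS {M : Type*} [AddCommMonoid M] :
    ∀ (n : ℕ) (S : Finset ℕ), (∑ i ∈ S, (i + 1)) = n → S.Nonempty →
      ∀ a : Stream' M, (∑ i ∈ S, a.get i) ∈ FS a := by
  intro n
  induction n using Nat.strong_induction_on with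
  | _ n ih =>
    intro S hn hS a
    by_cases h0 : 0 ∈ S
    · set S' : Finset ℕ := (S.erase 0).image (· - 1) with hS'
      have hinj : ∀ x ∈ S.erase 0, ∀ y ∈ S.erase 0, x - 1 = y - 1 → x = y := by
        intro x hx y hy hxy
        have hx0 : x ≠ 0 := Finset.ne_of_mem_erase hx
        have hy0 : y ≠ 0 := Finset.ne_of_mem_erase hy
        omega
      have hsum : ∑ j ∈ S', a.tail.get j = ∑ i ∈ S.erase 0, a.get i := by
        rw [hS', Finset.sum_image hinj]
        apply Finset.sum_congr rfl
        intro x hx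
        have hx0 : x ≠ 0 := Finset.ne_of_mem_erase hx
        rw [Stream'.get_tail]
        congr 1
        omega
      have hsplit : ∑ i ∈ S, a.get i = a.get 0 + ∑ i ∈ S.erase 0, a.get i := by
        rw [Finset.add_sum_erase _ _ h0]
      by_cases hS'e : S' = ∅
      · have he : S.erase 0 = ∅ := Finset.image_eq_empty.mp (hS' ▸ hS'e)
        rw [hsplit, he, Finset.sum_empty, add_zero]
        exact FS.head a
      · have hμ : (∑ j ∈ S', (j + 1)) < n := by
          have h1 : (∑ j ∈ S', (j + 1)) = ∑ i ∈ S.erase 0, i := by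
            rw [hS', Finset.sum_image hinj]
            apply Finset.sum_congr rfl
            intro x hx
            have hx0 : x ≠ 0 := Finset.ne_of_mem_erase hx
            omega
          have h2 : (∑ i ∈ S.erase 0, i) + 1 ≤ ∑ i ∈ S.erase 0, (i + 1) + 1 := by
            gcongr <;> omega
          have h3 : (∑ i ∈ S.erase 0, (i + 1)) + 1 = ∑ i ∈ S, (i + 1) := by
            rw [← Finset.add_sum_erase _ _ h0]; omega
          omega
        have hmem := ih _ hμ S' rfl (Finset.nonempty_iff_ne_empty.mpr hS'e) a.tail
        rw [hsum] at hmem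
        have hfs := FS.cons a _ hmem
        have hh : a.head = a.get 0 := rfl
        rw [hh] at hfs
        rwa [hsplit]
    · -- 0 ∉ S
      set S' : Finset ℕ := S.image (· - 1) with hS'
      have hne0 : ∀ x ∈ S, x ≠ 0 := fun x hx => fun h => h0 (h ▸ hx)
      have hinj : ∀ x ∈ S, ∀ y ∈ S, x - 1 = y - 1 → x = y := by
        intro x hx y hy hxy
        have := hne0 x hx; have := hne0 y hy; omega
      have hsum : ∑ j ∈ S', a.tail.get j = ∑ i ∈ S, a.get i := by
        rw [hS', Finset.sum_image hinj]
        apply Finset.sum_congr rfl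
        intro x hx
        rw [Stream'.get_tail]
        congr 1
        have := hne0 x hx; omega
      have hμ : (∑ j ∈ S', (j + 1)) < n := by
        have h1 : (∑ j ∈ S', (j + 1)) = ∑ i ∈ S, i := by
          rw [hS', Finset.sum_image hinj]
          apply Finset.sum_congr rfl
          intro x hx
          have := hne0 x hx; omega
        have h2 : (∑ i ∈ S, i) < ∑ i ∈ S, (i + 1) :=
          Finset.sum_lt_sum_of_nonempty hS (fun i _ => by omega)
        omega
      have hmem := ih _ hμ S' rfl (hS.image _) a.tail
      rw [hsum] at hmem
      exact FS.tail a _ hmem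

/-- Every finite sum is a sum of stream entries over a nonempty finset of indices. -/
lemma FS_eq_sum {M : Type*} [AddCommMonoid M] {a : Stream' M} {m : M} (hm : m ∈ FS a) :
    ∃ S : Finset ℕ, S.Nonempty ∧ m = ∑ i ∈ S, a.get i := by
  induction hm with
  | head' a => exact ⟨{0}, Finset.singleton_nonempty 0, by rw [Finset.sum_singleton]⟩
  | tail' a m h ih =>
    obtain ⟨S, hS, hsum⟩ := ih
    refine ⟨S.image (· + 1), hS.image _, ?_⟩
    rw [Finset.sum_image (by intro x _ y _ h; simpa using h)]
    simpa [Stream'.get_tail] using hsum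
  | cons' a m h ih =>
    obtain ⟨S, hS, hsum⟩ := ih
    refine ⟨insert 0 (S.image (· + 1)), Finset.insert_nonempty _ _, ?_⟩
    rw [Finset.sum_insert (by simp), Finset.sum_image (by intro x _ y _ h; simpa using h)]
    simp only [← Stream'.get_tail]
    rw [← hsum]

/-- Indivisibility of the countable-dimensional vector space over `𝔽₂`
(a consequence of Hindman's theorem): for every partition of the nonzero
vectors of a vector space of countably infinite dimension over `ℤ/2` into
finitely many pieces, one piece contains all nonzero vectors of an
infinite-dimensional subspace. -/
theorem f2_vector_space_indivisible (V : Type*) [AddCommGroup V]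
    [Module (ZMod 2) V] (hdim : Nonempty (Module.Basis ℕ (ZMod 2) V))
    (r : ℕ) (p : V → Fin r) :
    ∃ i : Fin r, ∃ W : Submodule (ZMod 2) V,
      ¬ Module.Finite (ZMod 2) W ∧ ∀ v ∈ W, v ≠ 0 → p v = i := by
  obtain ⟨e⟩ := hdim
  -- the stream of basis vectors
  set a : Stream' V := fun n => e n with ha
  -- sums of basis vectors over nonempty finsets are nonzero
  have hFSa : ∀ m ∈ FS a, m ≠ 0 := by
    intro m hm hm0
    obtain ⟨S, hS, hsum⟩ := FS_eq_sum hm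
    obtain ⟨x, hx⟩ := hS
    have hli := e.linearIndependent
    rw [linearIndependent_iff'] at hli
    have : (1 : ZMod 2) = 0 := by
      apply hli S (fun _ => 1) _ x hx
      simp only [one_smul]; exact hsum.symm.trans hm0
    simp at this
  -- the cover by color classes of nonzero vectors
  set c : Set (Set V) := Set.range (fun i : Fin r => p ⁻¹' {i} ∩ {v | v ≠ 0}) with hc
  have hcov : FS a ⊆ ⋃₀ c := by
    intro m hm
    exact ⟨p ⁻¹' {p m} ∩ {v | v ≠ 0}, ⟨p m, rfl⟩, rfl, hFSa m hm⟩
  obtain ⟨s, hs, b, hb⟩ := FS_partition_regular a c (Set.finite_range _) hcov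
  obtain ⟨i, rfl⟩ := hs
  refine ⟨i, Submodule.span (ZMod 2) (Set.range b.get), ?_, ?_⟩
  · -- infinite-dimensional
    intro hfin
    set W := Submodule.span (ZMod 2) (Set.range b.get) with hW
    set d := Module.finrank (ZMod 2) W with hd
    set v : Fin (d + 1) → W := fun k =>
      ⟨b.get k, Submodule.subset_span (Set.mem_range_self _)⟩ with hv
    have hnli : ¬ LinearIndependent (ZMod 2) v := by
      intro hli
      have := hli.fintype_card_le_finrank
      simp [hd] at this
    obtain ⟨g, hg0, k, hk⟩ := Fintype.not_linearIndependent_iff.mp hnli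
    -- restrict to the support of g, where all coefficients are 1
    have hone : ∀ x : ZMod 2, x ≠ 0 → x = 1 := by decide
    set S : Finset (Fin (d + 1)) := Finset.univ.filter (fun k => g k ≠ 0) with hSdef
    have hsum : (∑ k ∈ S, v k) = 0 := by
      rw [← hg0]
      rw [Finset.sum_filter]
      apply Finset.sum_congr rfl
      intro x _
      by_cases hx : g x = 0
      · simp [hx]
      · simp [hx, hone _ hx]
    have hScoe : (∑ k ∈ S, b.get k) = 0 := by
      have := congrArg (Subtype.val) hsum
      simpa [hv] using this
    -- transfer to a finset of natural number indices
    set T : Finset ℕ := S.image (Fin.val) with hT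
    have hTsum : (∑ n ∈ T, b.get n) = 0 := by
      rw [hT, Finset.sum_image (fun x _ y _ h => Fin.val_injective h)]
      exact hScoe
    have hTne : T.Nonempty := ⟨k, Finset.mem_image_of_mem _ (by simp [hSdef, hk])⟩
    have h0FS : (0 : V) ∈ FS b := by
      rw [← hTsum]
      exact sum_mem_FS _ T rfl hTne b
    exact (hb h0FS).2 rfl
  · -- monochromatic
    intro w hw hw0
    rw [Finsupp.mem_span_range_iff_exists_finsupp] at hw
    obtain ⟨cf, hcf⟩ := hw
    have hone : ∀ x : ZMod 2, x ≠ 0 → x = 1 := by decide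
    have hsum : w = ∑ n ∈ cf.support, b.get n := by
      rw [← hcf, Finsupp.sum]
      apply Finset.sum_congr rfl
      intro x hx
      rw [hone _ (Finsupp.mem_support_iff.mp hx), one_smul]
    have hne : cf.support.Nonempty := by
      rcases Finset.eq_empty_or_nonempty cf.support with h | h
      · exact absurd (by simp [hsum, h]) hw0
      · exact h
    have : w ∈ FS b := hsum ▸ sum_mem_FS _ cf.support rfl hne b
    exact (hb this).1
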